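/- Let R be a 2-torsion free ring with unity and r ≥ 2 an integer. If T : M_r(R) → M_r(R) is an additive mapping satisfying 2T(x²) = T(x)x + xT(x) for all x ∈ M_r(R), then there exists α in the center Z(R) of R such that T(x) = α·x for all x ∈ M_r(R); in particular, T is a two-sided centralizer. -/

import Mathlib

open Matrix

theorem vukman_identity_matrix {R : Type*} [Ring R]
    (htf : ∀ a : R, 2 • a = 0 → a = 0)
    (r : ℕ) (hr : 2 ≤ r)
    (T : Matrix (Fin r) (Fin r) R → Matrix (Fin r) (Fin r) R)
    (hadd : ∀ x y, T (x + y) = T x + T y)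
    (h : ∀ x, 2 • T (x ^ 2) = T x * x + x * T x) :
    (∃ α ∈ Subring.center R, ∀ x, T x = α • x) ∧
      ∀ x y, T (x * y) = T x * y ∧ T (x * y) = x * T y := by
  classical
  set a := T 1 with ha
  have htfM : ∀ M : Matrix (Fin r) (Fin r) R, 2 • M = 0 → M = 0 := by
    intro M hM
    ext i j
    have := congrFun (congrFun hM i) j
    simp only [Matrix.smul_apply, Matrix.zero_apply] at this
    exact htf _ this
  have key : ∀ x, 2 • T x = a * x + x * a := by
    intro x
    have e := h (x + 1)
    have hsq : (x + 1) ^ 2 = x ^ 2 + (x + (x + 1)) := by noncomm_ring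
    rw [hsq, hadd, hadd, hadd x 1] at e
    have hx := h x
    have cancel : 2 • T x - (a * x + x * a) =
        (2 • (T (x ^ 2) + (T x + (T x + T 1))) -
          ((T x + T 1) * (x + 1) + (x + 1) * (T x + T 1))) -
        (2 • T (x ^ 2) - (T x * x + x * T x)) := by
      simp only [ha]
      noncomm_ring
    rw [e, hx, sub_self, sub_self, sub_zero] at cancel
    exact sub_eq_zero.mp cancel
  have quad : ∀ x, a * x ^ 2 + x ^ 2 * a = 2 • (x * a * x) := by
    intro x
    have e1 : a * x ^ 2 + x ^ 2 * a = T x * x + x * T x := (key (x ^ 2)).symm.trans (h x)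
    have e2 : (2 • T x) * x + x * (2 • T x) = (a * x + x * a) * x + x * (a * x + x * a) := by
      rw [key x]
    have cancel : (a * x ^ 2 + x ^ 2 * a) - 2 • (x * a * x) =
        ((2 • T x) * x + x * (2 • T x) - ((a * x + x * a) * x + x * (a * x + x * a)))
        - (2 • (T x * x + x * T x) - 2 • (a * x ^ 2 + x ^ 2 * a)) := by
      noncomm_ring
    rw [e2, sub_self, ← e1, sub_self, sub_zero] at cancel
    exact sub_eq_zero.mp cancel
  have offdiag : ∀ i j : Fin r, i ≠ j → a j i = 0 := by
    intro i j hij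
    set x : Matrix (Fin r) (Fin r) R := Matrix.single i j 1 with hx
    have hx2 : x ^ 2 = 0 := by
      rw [sq, hx, Matrix.single_mul_single_of_ne _ _ _ _ (Ne.symm hij)]
    have hq := quad x
    rw [hx2, mul_zero, zero_mul, add_zero] at hq
    have hz : x * a * x = 0 := htfM _ hq.symm
    have hz' := congrFun (congrFun hz i) j
    rw [hx] at hz'
    simp only [Matrix.single_mul_apply_same,
      Matrix.mul_single_apply_same, Matrix.zero_apply, one_mul, mul_one] at hz'
    exact hz'
  have diagrel : ∀ i j : Fin r, i ≠ j → ∀ c : R, c * (a j j) = (a i i) * c := by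
    intro i j hij c
    set x : Matrix (Fin r) (Fin r) R :=
      Matrix.single i i 1 + Matrix.single i j c with hx
    have hx2 : x ^ 2 = x := by
      rw [sq, hx, add_mul, mul_add, mul_add,
        Matrix.single_mul_single_same, Matrix.single_mul_single_same,
        Matrix.single_mul_single_of_ne _ _ _ _ (Ne.symm hij),
        Matrix.single_mul_single_of_ne _ _ _ _ (Ne.symm hij)]
      simp
    have e := quad x
    rw [hx2] at e
    have e' := congrFun (congrFun e i) j
    simp [hx, Matrix.mul_add, Matrix.add_mul, Matrix.add_apply, Matrix.smul_apply,
      Matrix.mul_single_apply_same, Matrix.single_mul_apply_same,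
      offdiag j i (Ne.symm hij), offdiag i j hij, hij, Ne.symm hij, one_mul, mul_one,
      mul_zero, zero_mul, add_zero, zero_add, two_smul] at e'
    exact e'
  -- assemble: a = α • 1 with α central
  have h01 : (⟨0, by omega⟩ : Fin r) ≠ ⟨1, by omega⟩ := by
    simp [Fin.ext_iff]
  set i0 : Fin r := ⟨0, by omega⟩
  set i1 : Fin r := ⟨1, by omega⟩
  set α : R := a i0 i0 with hα
  have hdiag : ∀ i : Fin r, a i i = α := by
    intro i
    by_cases hi : i = i0
    · rw [hi]
    · have := diagrel i0 i (Ne.symm hi) 1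
      simpa using this
  have hcent : ∀ c : R, c * α = α * c := by
    intro c
    have := diagrel i0 i1 h01 c
    rwa [hdiag i1] at this
  have haI : a = α • (1 : Matrix (Fin r) (Fin r) R) := by
    ext p q
    by_cases hpq : p = q
    · subst hpq
      simp [hdiag p, Matrix.one_apply]
    · simp [offdiag q p (fun hh => hpq hh.symm), Matrix.one_apply, hpq]
  have hmul_left : ∀ x : Matrix (Fin r) (Fin r) R, a * x = α • x := by
    intro x
    rw [haI, smul_mul_assoc, one_mul]
  have hmul_right : ∀ x : Matrix (Fin r) (Fin r) R, x * a = α • x := by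
    intro x
    rw [haI]
    ext p q
    simp only [Matrix.mul_apply, Matrix.smul_apply, Matrix.one_apply, smul_eq_mul, mul_ite,
      mul_one, mul_zero, Finset.sum_ite_eq', Finset.mem_univ, if_true]
    exact hcent (x p q)
  have Tsc : ∀ x, T x = α • x := by
    intro x
    have hk := key x
    rw [hmul_left, hmul_right] at hk
    have : 2 • (T x - α • x) = 0 := by
      rw [smul_sub, hk]
      abel
    have := htfM _ this
    rwa [sub_eq_zero] at this
  have hsmul_comm : ∀ x y : Matrix (Fin r) (Fin r) R, α • (x * y) = x * (α • y) := by
    intro x y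
    ext p q
    rw [Matrix.smul_apply, Matrix.mul_apply, Matrix.mul_apply, Finset.smul_sum]
    refine Finset.sum_congr rfl fun k _ => ?_
    rw [Matrix.smul_apply, smul_eq_mul, smul_eq_mul, ← mul_assoc, ← hcent (x p k), mul_assoc]
  refine ⟨⟨α, Subring.mem_center_iff.mpr hcent, Tsc⟩, fun x y => ?_⟩
  constructor
  · rw [Tsc, Tsc, smul_mul_assoc]
  · rw [Tsc, Tsc, hsmul_comm]
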